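/- Let m ≥ 3, let b be an m×m real matrix, and let ψ : Fin m → ℝ. Suppose that for all sufficiently large r ∈ ℝ (so that r·1 − b is invertible) and for all i: 2·∑_{l,k} ψ_l · ρ(r)_{l k} · ρ(r)_{k i} = ( ∑_k ρ(r)_{k k} ) · ∑_l ψ_l · ρ(r)_{l i}, where ρ(r) = (r·1 − b)⁻¹. Then ψ = 0. -/

import Mathlib

open Matrix Filter Topology

section Aux

attribute [local instance] Matrix.linftyOpNormedRing Matrix.linftyOpNormedAlgebra

variable {m : ℕ}

private lemma entry_le_norm (M : Matrix (Fin m) (Fin m) ℝ) (l k : Fin m) :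
    ‖M l k‖ ≤ ‖M‖ := by
  have h1 : ‖M l k‖₊ ≤ ∑ j, ‖M l j‖₊ :=
    Finset.single_le_sum (f := fun j => ‖M l j‖₊) (fun _ _ => zero_le) (Finset.mem_univ k)
  have h2 : ∑ j, ‖M l j‖₊ ≤ ‖M‖₊ := by
    rw [Matrix.linfty_opNNNorm_def]
    exact Finset.le_sup (f := fun i => ∑ j, ‖M i j‖₊) (Finset.mem_univ l)
  exact_mod_cast h1.trans h2

private lemma tendsto_entry {f : ℝ → Matrix (Fin m) (Fin m) ℝ} {A : Matrix (Fin m) (Fin m) ℝ}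
    (hf : Tendsto f atTop (𝓝 A)) (l k : Fin m) :
    Tendsto (fun r => f r l k) atTop (𝓝 (A l k)) := by
  replace hf := (tendsto_iff_norm_sub_tendsto_zero).mp hf
  rw [tendsto_iff_norm_sub_tendsto_zero]
  refine squeeze_zero (fun r => norm_nonneg _) (fun r => ?_) hf
  have : f r l k - A l k = (f r - A) l k := rfl
  rw [this]
  exact entry_le_norm _ _ _

private lemma tendsto_ringInverse (b : Matrix (Fin m) (Fin m) ℝ) :
    Tendsto (fun r : ℝ => Ring.inverse (1 - r⁻¹ • b)) atTop
      (𝓝 (1 : Matrix (Fin m) (Fin m) ℝ)) := by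
  haveI : CompleteSpace (Matrix (Fin m) (Fin m) ℝ) := FiniteDimensional.complete ℝ _
  have h0 : Tendsto (fun r : ℝ => r⁻¹ • b) atTop (𝓝 ((0:ℝ) • b)) :=
    Filter.Tendsto.smul_const tendsto_inv_atTop_zero b
  rw [zero_smul] at h0
  have h1 : Tendsto (fun r : ℝ => (1 : Matrix (Fin m) (Fin m) ℝ) - r⁻¹ • b) atTop (𝓝 1) := by
    simpa using tendsto_const_nhds.sub h0
  have h2 := (NormedRing.inverse_continuousAt (1 : (Matrix (Fin m) (Fin m) ℝ)ˣ)).tendsto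
  simp only [Units.val_one, Ring.inverse_one] at h2
  exact h2.comp h1

end Aux

/-- **The step `Ψ_i = 0` (eq. (29) ⇒ ψ = 0).**
If `2 ∑_{l,k} ψ_l ρ(r)_{lk} ρ(r)_{ki} = (tr ρ(r)) ∑_l ψ_l ρ(r)_{li}` holds for all
sufficiently large `r` (with `ρ(r) = (r·1 - b)⁻¹` and `m ≥ 3`), then `ψ = 0`. -/
theorem psi_vanishes
    (m : ℕ) (hm : 3 ≤ m) (b : Matrix (Fin m) (Fin m) ℝ) (ψ : Fin m → ℝ)
    (h : ∃ R : ℝ, ∀ r : ℝ, R ≤ r →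
      IsUnit (r • (1 : Matrix (Fin m) (Fin m) ℝ) - b) ∧
      ∀ i, 2 * ∑ l, ∑ k, ψ l * (r • (1 : Matrix (Fin m) (Fin m) ℝ) - b)⁻¹ l k
              * (r • (1 : Matrix (Fin m) (Fin m) ℝ) - b)⁻¹ k i
        = (∑ k, (r • (1 : Matrix (Fin m) (Fin m) ℝ) - b)⁻¹ k k)
            * ∑ l, ψ l * (r • (1 : Matrix (Fin m) (Fin m) ℝ) - b)⁻¹ l i) :
    ψ = 0 := by
  obtain ⟨R, hR⟩ := h
  -- the rescaled entries
  set a : Fin m → Fin m → ℝ → ℝ :=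
    fun l k r => r * (r • (1 : Matrix (Fin m) (Fin m) ℝ) - b)⁻¹ l k with ha
  set d : Fin m → Fin m → ℝ := fun l k => if l = k then 1 else 0 with hd
  -- eventual identification with the ring inverse of `1 - r⁻¹ • b`
  have hev : ∀ᶠ r : ℝ in atTop, ∀ l k,
      a l k r = Ring.inverse (1 - r⁻¹ • b : Matrix (Fin m) (Fin m) ℝ) l k := by
    filter_upwards [eventually_ge_atTop (max R 1)] with r hr l k
    have hrR : R ≤ r := le_trans (le_max_left _ _) hr
    have hr1 : (1:ℝ) ≤ r := le_trans (le_max_right _ _) hr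
    have hr0 : r ≠ 0 := by positivity
    obtain ⟨hu, -⟩ := hR r hrR
    have hdet : IsUnit (r • (1 : Matrix (Fin m) (Fin m) ℝ) - b).det :=
      (Matrix.isUnit_iff_isUnit_det _).mp hu
    have hsm : (1 : Matrix (Fin m) (Fin m) ℝ) - r⁻¹ • b
        = r⁻¹ • (r • (1 : Matrix (Fin m) (Fin m) ℝ) - b) := by
      rw [smul_sub, smul_smul, inv_mul_cancel₀ hr0, one_smul]
    haveI : Invertible (r⁻¹ : ℝ) := invertibleOfNonzero (inv_ne_zero hr0)
    have hinv : ((1 : Matrix (Fin m) (Fin m) ℝ) - r⁻¹ • b)⁻¹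
        = r • (r • (1 : Matrix (Fin m) (Fin m) ℝ) - b)⁻¹ := by
      rw [hsm, Matrix.inv_smul _ r⁻¹ hdet, invOf_eq_inv, inv_inv]
    rw [← Matrix.nonsing_inv_eq_ringInverse, hinv]
    simp [ha, Matrix.smul_apply, smul_eq_mul]
  -- limit of each rescaled entry
  have hlim : ∀ l k, Tendsto (a l k) atTop (𝓝 (d l k)) := by
    intro l k
    have h1 := tendsto_entry (tendsto_ringInverse b) l k
    have h2 : (1 : Matrix (Fin m) (Fin m) ℝ) l k = d l k := by
      simp [hd, Matrix.one_apply]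
    rw [h2] at h1
    refine h1.congr' ?_
    filter_upwards [hev] with r hr
    exact (hr l k).symm
  funext i
  show ψ i = 0
  -- the two sides, rescaled
  have hL : Tendsto (fun r => 2 * ∑ l, ∑ k, ψ l * a l k r * a k i r) atTop
      (𝓝 (2 * ∑ l, ∑ k, ψ l * d l k * d k i)) := by
    refine (tendsto_finset_sum _ fun l _ => tendsto_finset_sum _ fun k _ => ?_).const_mul 2
    exact ((tendsto_const_nhds.mul (hlim l k)).mul (hlim k i))
  have hRt : Tendsto (fun r => (∑ k, a k k r) * ∑ l, ψ l * a l i r) atTop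
      (𝓝 ((∑ k, d k k) * ∑ l, ψ l * d l i)) := by
    exact (tendsto_finset_sum _ fun k _ => hlim k k).mul
      (tendsto_finset_sum _ fun l _ => tendsto_const_nhds.mul (hlim l i))
  -- eventual equality from the hypothesis
  have hEq : (fun r => 2 * ∑ l, ∑ k, ψ l * a l k r * a k i r) =ᶠ[atTop]
      (fun r => (∑ k, a k k r) * ∑ l, ψ l * a l i r) := by
    filter_upwards [eventually_ge_atTop R] with r hr
    obtain ⟨-, heq⟩ := hR r hr
    have heqi := heq i
    set ρ := (r • (1 : Matrix (Fin m) (Fin m) ℝ) - b)⁻¹ with hρ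
    have e1 : ∑ l, ∑ k, ψ l * a l k r * a k i r
        = r * r * ∑ l, ∑ k, ψ l * ρ l k * ρ k i := by
      rw [Finset.mul_sum]
      refine Finset.sum_congr rfl fun l _ => ?_
      rw [Finset.mul_sum]
      refine Finset.sum_congr rfl fun k _ => ?_
      simp only [ha]; ring
    have e2 : (∑ k, a k k r) = r * ∑ k, ρ k k := by
      rw [Finset.mul_sum]
    have e3 : (∑ l, ψ l * a l i r) = r * ∑ l, ψ l * ρ l i := by
      rw [Finset.mul_sum]
      refine Finset.sum_congr rfl fun l _ => ?_
      simp only [ha]; ring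
    simp only [e1, e2, e3]
    linear_combination (r * r) * heqi
  have hfinal : 2 * ∑ l, ∑ k, ψ l * d l k * d k i
      = (∑ k, d k k) * ∑ l, ψ l * d l i :=
    tendsto_nhds_unique (hL.congr' hEq) hRt
  have hdsum : (∑ k, d k k) = (m : ℝ) := by simp [hd]
  have hdi : (∑ l, ψ l * d l i) = ψ i := by
    simp [hd, Finset.sum_ite_eq', mul_ite]
  have hdd : (∑ l, ∑ k, ψ l * d l k * d k i) = ψ i := by
    simp [hd, Finset.sum_ite_eq', mul_ite]
  rw [hdsum, hdi, hdd] at hfinal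
  have hm3 : (3 : ℝ) ≤ (m : ℝ) := by exact_mod_cast hm
  have : ((m : ℝ) - 2) * ψ i = 0 := by linarith [hfinal]
  have hne : ((m : ℝ) - 2) ≠ 0 := by linarith
  exact (mul_eq_zero.mp this).resolve_left hne
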